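/- Let E be a finite set of environments with |E| ≥ 2, let each L_e : ℝⁿ → ℝ be twice continuously differentiable, fix θ ∈ ℝⁿ, and let s be the set of ordered pairs of distinct environments {(i,j) : i,j ∈ E, i ≠ j}, equipped with the uniform distribution. Then the variance of the post-update losses expands as: the function α ↦ Var_s[L_j(θ − α∇L_i(θ))] − Var_s[L_j(θ)] + 2α Cov_s[L_j(θ), ⟨∇L_i(θ), ∇L_j(θ)⟩] is O(α²) as α → 0, where the variance and covariance are taken over the random pair (i,j) ∈ s. -/

import Mathlib

open scoped RealInnerProductSpace Topology
open Asymptotics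

/-- The uniform mean over ordered pairs of distinct environments. -/
noncomputable def pairMean {ι : Type*} [Fintype ι] [DecidableEq ι] (f : ι × ι → ℝ) : ℝ :=
  ((Finset.univ : Finset ι).offDiag.card : ℝ)⁻¹ * ∑ p ∈ (Finset.univ : Finset ι).offDiag, f p

/-- The variance over ordered pairs of distinct environments:
`Var_s[A] = E_s[(A - E_s A)²]`. -/
noncomputable def pairVar {ι : Type*} [Fintype ι] [DecidableEq ι] (f : ι × ι → ℝ) : ℝ :=
  pairMean fun p => (f p - pairMean f) ^ 2

/-- The covariance over ordered pairs of distinct environments: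
`Cov_s[A,B] = E_s[AB] - E_s[A] E_s[B]`. -/
noncomputable def pairCov {ι : Type*} [Fintype ι] [DecidableEq ι] (f g : ι × ι → ℝ) : ℝ :=
  pairMean (fun p => f p * g p) - pairMean f * pairMean g

theorem isBigO_sq_of_contDiff_two (f : ℝ → ℝ) (hf : ContDiff ℝ 2 f)
    (h0 : f 0 = 0) (h1 : deriv f 0 = 0) : f =O[𝓝 (0:ℝ)] fun x => x ^ 2 := by
  have hf' : ContDiff ℝ (1 + 1) f := by norm_num; exact hf
  obtain ⟨hdiff, -, hder⟩ := contDiff_succ_iff_deriv.mp hf'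
  have hd' : DifferentiableAt ℝ (deriv f) 0 := (hder.differentiable one_ne_zero) 0
  have hO : (deriv f) =O[𝓝 (0:ℝ)] fun x => x := by
    simpa [h1] using hd'.isBigO_sub
  obtain ⟨K, hK0, hKb⟩ := hO.exists_pos
  rw [IsBigOWith] at hKb
  rw [Metric.eventually_nhds_iff] at hKb
  obtain ⟨ε, hε, hball⟩ := hKb
  apply IsBigO.of_bound K
  rw [Metric.eventually_nhds_iff]
  refine ⟨ε, hε, fun {x} hx => ?_⟩
  have hxε : |x| < ε := by simpa [Real.dist_eq] using hx
  have bound : ∀ t ∈ Set.uIcc (0:ℝ) x, ‖deriv f t‖ ≤ K * |x| := by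
    intro t ht
    rw [Set.uIcc_eq_union, Set.mem_union] at ht
    have htx : |t| ≤ |x| := by
      rcases ht with ht | ht <;> rw [Set.mem_Icc] at ht <;>
        · have := abs_le_max_abs_abs ht.1 ht.2
          simpa using this
    have : ‖deriv f t‖ ≤ K * ‖t‖ := by
      apply hball
      simp only [Real.dist_eq, sub_zero]
      exact lt_of_le_of_lt htx hxε
    calc ‖deriv f t‖ ≤ K * ‖t‖ := this
      _ ≤ K * |x| := by
          exact mul_le_mul_of_nonneg_left (by simpa using htx) hK0.le
  have := (convex_uIcc (0:ℝ) x).norm_image_sub_le_of_norm_deriv_le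
    (fun t _ => hdiff.differentiableAt) bound Set.left_mem_uIcc Set.right_mem_uIcc
  calc ‖f x‖ = ‖f x - f 0‖ := by rw [h0, sub_zero]
    _ ≤ (K * |x|) * ‖x - 0‖ := this
    _ = K * ‖x ^ 2‖ := by
        rw [sub_zero]
        rw [Real.norm_eq_abs, Real.norm_eq_abs, abs_pow]
        ring

/-- Expansion of the variance of the post-update losses:
`Var_s[L_j(θ - α∇L_i(θ))] - Var_s[L_j(θ)] + 2α Cov_s[L_j(θ), ⟨∇L_i(θ), ∇L_j(θ)⟩] = O(α²)`
as `α → 0`, where `s` is the uniform distribution over ordered pairs of distinct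
environments from a finite set of at least two environments. -/
theorem maml_irm_variance_expansion {n : ℕ} {ι : Type*} [Fintype ι] [DecidableEq ι]
    (hcard : 2 ≤ Fintype.card ι)
    (L : ι → EuclideanSpace ℝ (Fin n) → ℝ) (hL : ∀ e, ContDiff ℝ 2 (L e))
    (θ : EuclideanSpace ℝ (Fin n)) :
    (fun α : ℝ =>
        pairVar (fun p : ι × ι => L p.2 (θ - α • gradient (L p.1) θ))
          - pairVar (fun p : ι × ι => L p.2 θ)
          + 2 * α * pairCov (fun p : ι × ι => L p.2 θ)
              (fun p : ι × ι => ⟪gradient (L p.1) θ, gradient (L p.2) θ⟫))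
      =O[𝓝 (0 : ℝ)] fun α : ℝ => α ^ 2 := by
  classical
  set v : ι → EuclideanSpace ℝ (Fin n) := fun i => gradient (L i) θ with hv
  set od := (Finset.univ : Finset ι).offDiag with hod
  set c : ℝ := ((od.card : ℝ))⁻¹ with hc
  set b : ι × ι → ℝ := fun p => ⟪v p.1, v p.2⟫ with hb
  set a : ι × ι → ℝ := fun p => L p.2 θ with ha
  -- nonemptiness
  have hne : od.Nonempty := by
    obtain ⟨i, j, hij⟩ := Fintype.exists_pair_of_one_lt_card (α := ι) (by omega)
    exact ⟨(i, j), Finset.mem_offDiag.mpr ⟨Finset.mem_univ _, Finset.mem_univ _, hij⟩⟩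
  have hcN : c * (od.card : ℝ) = 1 :=
    inv_mul_cancel₀ (Nat.cast_ne_zero.mpr (Finset.card_ne_zero.mpr hne))
  -- smoothness of each post-update loss
  have hg : ∀ p : ι × ι, ContDiff ℝ 2 (fun α : ℝ => L p.2 (θ - α • v p.1)) := by
    intro p
    exact (hL p.2).comp (contDiff_const.sub (contDiff_id.smul contDiff_const))
  -- derivative of each post-update loss at 0
  have hinner : ∀ (j : ι) (u : EuclideanSpace ℝ (Fin n)),
      (fderiv ℝ (L j) θ) u = ⟪v j, u⟫ := by
    intro j u
    rw [hv]
    simp only [gradient]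
    rw [InnerProductSpace.toDual_symm_apply]
  have hg' : ∀ p : ι × ι,
      HasDerivAt (fun α : ℝ => L p.2 (θ - α • v p.1)) (-(b p)) 0 := by
    intro p
    have hcurve : HasDerivAt (fun α : ℝ => θ - α • v p.1) (-(v p.1)) 0 := by
      simpa using ((hasDerivAt_id (0:ℝ)).smul_const (v p.1)).const_sub θ
    have hF : HasFDerivAt (L p.2) (fderiv ℝ (L p.2) θ) ((fun α : ℝ => θ - α • v p.1) 0) := by
      simpa using (((hL p.2).differentiable (by norm_num)) θ).hasFDerivAt
    have := hF.comp_hasDerivAt 0 hcurve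
    have heq : (fderiv ℝ (L p.2) θ) (-(v p.1)) = -(b p) := by
      rw [hinner p.2 (-(v p.1)), inner_neg_right, hb]
      rw [real_inner_comm]
    rw [heq] at this
    exact this
  apply isBigO_sq_of_contDiff_two
  · -- C²
    simp only [pairVar, pairMean, pairCov, ← hod, ← hc, ← hv]
    apply ContDiff.add
    · apply ContDiff.sub _ contDiff_const
      apply ContDiff.mul contDiff_const
      apply ContDiff.sum
      intro p _
      exact ((hg p).sub (contDiff_const.mul (ContDiff.sum fun q _ => hg q))).pow 2
    · exact (contDiff_const.mul contDiff_id).mul contDiff_const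
  · -- value at 0
    simp [pairVar, ha]
  · -- derivative at 0
    have hM : HasDerivAt (fun α : ℝ => c * ∑ q ∈ od, L q.2 (θ - α • v q.1))
        (c * ∑ q ∈ od, -(b q)) 0 :=
      (HasDerivAt.fun_sum fun q _ => hg' q).const_mul c
    have hVar : HasDerivAt
        (fun α : ℝ => c * ∑ p ∈ od,
            (L p.2 (θ - α • v p.1) - c * ∑ q ∈ od, L q.2 (θ - α • v q.1)) ^ 2)
        (c * ∑ p ∈ od, ((2:ℕ) *
            (L p.2 (θ - (0:ℝ) • v p.1) - c * ∑ q ∈ od, L q.2 (θ - (0:ℝ) • v q.1)) ^ (2 - 1) *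
            (-(b p) - c * ∑ q ∈ od, -(b q)))) 0 :=
      (HasDerivAt.fun_sum fun p _ => ((hg' p).sub hM).pow 2).const_mul c
    set CV : ℝ := pairCov a (fun p : ι × ι => ⟪gradient (L p.1) θ, gradient (L p.2) θ⟫) with hCV
    have hLin : HasDerivAt (fun α : ℝ => 2 * α * CV) (2 * CV) 0 := by
      simpa using ((hasDerivAt_id (0:ℝ)).const_mul 2).mul_const CV
    have hF : HasDerivAt
        (fun α : ℝ =>
          pairVar (fun p : ι × ι => L p.2 (θ - α • gradient (L p.1) θ))
            - pairVar (fun p : ι × ι => L p.2 θ)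
            + 2 * α * pairCov (fun p : ι × ι => L p.2 θ)
                (fun p : ι × ι => ⟪gradient (L p.1) θ, gradient (L p.2) θ⟫))
        ((c * ∑ p ∈ od, ((2:ℕ) *
            (L p.2 (θ - (0:ℝ) • v p.1) - c * ∑ q ∈ od, L q.2 (θ - (0:ℝ) • v q.1)) ^ (2 - 1) *
            (-(b p) - c * ∑ q ∈ od, -(b q)))) + 2 * CV) 0 := by
      have := (hVar.sub_const (pairVar (fun p : ι × ι => L p.2 θ))).add hLin
      convert this using 2
      all_goals rfl
    rw [hF.deriv]
    -- now algebra
    have h0 : ∀ p : ι × ι, L p.2 (θ - (0:ℝ) • v p.1) = a p := by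
      intro p; simp [ha]
    simp only [h0]
    set SA : ℝ := ∑ p ∈ od, a p with hSA
    set SB : ℝ := ∑ p ∈ od, b p with hSB
    set SAB : ℝ := ∑ p ∈ od, a p * b p with hSAB
    have hCV' : CV = c * SAB - (c * SA) * (c * SB) := by
      simp only [hCV, pairCov, pairMean, ← hod, ← hc, ← hv, ← ha, ← hb, hSA, hSB, hSAB]
      rfl
    have hsum : ∑ q ∈ od, -(b q) = -SB := by simp [hSB]
    have key : ∑ p ∈ od, ((2:ℕ) * (a p - c * SA) ^ (2 - 1) * (-(b p) - c * -SB))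
        = -2 * SAB + (2 * c * SB) * SA + (2 * c * SA) * SB
          - (od.card : ℝ) * (2 * (c * SA) * (c * SB)) := by
      have hterm : ∀ p : ι × ι, ((2:ℕ) : ℝ) * (a p - c * SA) ^ (2 - 1) * (-(b p) - c * -SB)
          = (2 * c * SB) * a p - 2 * (a p * b p) + (2 * c * SA) * b p
            - (2 * (c * SA) * (c * SB)) := by
        intro p; push_cast; ring
      rw [Finset.sum_congr rfl fun p _ => hterm p]
      simp only [Finset.sum_sub_distrib, Finset.sum_add_distrib, ← Finset.mul_sum,
        Finset.sum_const, nsmul_eq_mul, ← hSA, ← hSB, ← hSAB]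
      ring
    rw [hsum, key, hCV']
    linear_combination (-2 * c^2 * SA * SB) * hcN
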